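/- Let N ≥ 1, let w ≥ 2 be even, let n be an integer with 0 < n < w, and set ñ = w − n. Consider the sum T = Σ 1/(a^{ñ+1}·c^{n+1}) taken over all pairs of nonzero integers (a, c) with gcd(a,c) = 1 and N ∣ c. If n is even then T = 0. If n is odd then T = (4·ζ(n+1)·ζ(ñ+1))/(ζ(w+2)·N^{n+1})·Π_{p ∣ N} (1−p^{−(ñ+1)})/(1−p^{−(w+2)}), where the product runs over the prime divisors p of N and ζ denotes the Riemann zeta function. -/

import Mathlib

open Complex



lemma tsum_comp_of_injective {β γ M : Type*} [AddCommMonoid M] [TopologicalSpace M]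
    {f : β → M} (i : γ → β) (hi : Function.Injective i)
    (h0 : ∀ b, b ∉ Set.range i → f b = 0) : ∑' c, f (i c) = ∑' b, f b := by
  refine (tsum_eq_tsum_of_ne_zero_bij (fun c => i c.1)
    (fun x y h => Subtype.ext (hi h)) ?_ fun _ => rfl).symm
  intro b hb
  have hb' : b ∈ Set.range i := by
    by_contra h
    exact hb (h0 b h)
  obtain ⟨c, rfl⟩ := hb'
  exact ⟨⟨c, hb⟩, rfl⟩

lemma summable_npow_inv {E : ℕ} (hE : 2 ≤ E) :
    Summable (fun k : ℕ => ((k : ℝ) ^ E)⁻¹) := by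
  simpa using Real.summable_nat_pow_inv.mpr (by omega : 1 < E)

lemma summable_dvd_npow_inv {E m : ℕ} (hE : 2 ≤ E) :
    Summable (fun k : ℕ => if m ∣ k then ((k : ℝ) ^ E)⁻¹ else 0) := by
  refine Summable.of_nonneg_of_le (fun k => ?_) (fun k => ?_) (summable_npow_inv hE)
  · split <;> positivity
  · split
    · exact le_rfl
    · positivity

lemma tsum_dvd_npow_inv {E : ℕ} (m : ℕ) (hE : 1 ≤ E) (hm : m ≠ 0) :
    ∑' k : ℕ, (if m ∣ k then ((k : ℝ) ^ E)⁻¹ else 0)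
      = ((m : ℝ) ^ E)⁻¹ * ∑' k : ℕ, ((k : ℝ) ^ E)⁻¹ := by
  rw [← tsum_comp_of_injective (fun k : ℕ => m * k)
      (fun a b h => by simpa [hm] using h)
      (fun b hb => by
        rw [if_neg]
        exact fun hd => hb (by obtain ⟨k, rfl⟩ := hd; exact ⟨k, rfl⟩)),
    ← tsum_mul_left]
  refine tsum_congr fun k => ?_
  rcases eq_or_ne k 0 with rfl | hk
  · simp [zero_pow (by omega : E ≠ 0)]
  · rw [if_pos ⟨k, rfl⟩]
    push_cast
    rw [mul_pow, mul_inv]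


lemma tsum_pair_mul {f g : ℕ → ℝ} (hf : Summable f) (hg : Summable g)
    (hf0 : ∀ k, 0 ≤ f k) (hg0 : ∀ k, 0 ≤ g k) :
    ∑' q : ℕ × ℕ, f q.1 * g q.2 = (∑' k, f k) * (∑' k, g k) :=
  (Summable.tsum_mul_tsum hf hg (hf.mul_of_nonneg hg hf0 hg0)).symm

lemma moeb_sum (n : ℕ) :
    ∑ d ∈ n.divisors, ((ArithmeticFunction.moebius d : ℤ) : ℝ)
      = if n = 1 then 1 else 0 := by
  have h : ((ArithmeticFunction.moebius * ↑ArithmeticFunction.zeta : ArithmeticFunction ℤ)) n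
      = (1 : ArithmeticFunction ℤ) n := by
    rw [ArithmeticFunction.moebius_mul_coe_zeta]
  rw [ArithmeticFunction.coe_mul_zeta_apply, ArithmeticFunction.one_apply] at h
  rw [show (∑ d ∈ n.divisors, ((ArithmeticFunction.moebius d : ℤ) : ℝ))
      = ((∑ d ∈ n.divisors, ArithmeticFunction.moebius d : ℤ) : ℝ) by push_cast; rfl, h]
  split <;> norm_num

lemma odd_case_main (N A C : ℕ) (hN : 1 ≤ N) (hA : 2 ≤ A) (hC : 2 ≤ C) :
    ∑' q : ℕ × ℕ, (if q.1 ≠ 0 ∧ q.2 ≠ 0 ∧ Nat.gcd q.1 q.2 = 1 ∧ N ∣ q.2 then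
        ((q.1 : ℝ) ^ A * (q.2 : ℝ) ^ C)⁻¹ else 0)
      = (∑' k : ℕ, ((k : ℝ) ^ A)⁻¹) * (∑' k : ℕ, ((k : ℝ) ^ C)⁻¹) *
        ∑' d : ℕ, ((ArithmeticFunction.moebius d : ℝ) * ((d : ℝ) ^ A)⁻¹ *
          ((Nat.lcm d N : ℝ) ^ C)⁻¹) := by
  have hN0 : N ≠ 0 := by omega
  set ZA := ∑' k : ℕ, ((k : ℝ) ^ A)⁻¹ with hZA
  set ZC := ∑' k : ℕ, ((k : ℝ) ^ C)⁻¹ with hZC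
  set σ : ℕ → ℕ → ℕ → ℝ := fun m E k => if m ∣ k then ((k : ℝ) ^ E)⁻¹ else 0 with hσ
  have σ_nonneg : ∀ m E k, 0 ≤ σ m E k := by
    intro m E k; simp only [hσ]; split <;> positivity
  have σ_zero : ∀ m E, 1 ≤ E → σ m E 0 = 0 := by
    intro m E hE
    simp [hσ, zero_pow (by omega : E ≠ 0)]
  set K : ℕ → ℕ × ℕ → ℝ := fun d q =>
    (ArithmeticFunction.moebius d : ℝ) * σ d A q.1 * σ (Nat.lcm d N) C q.2 with hK
  -- Step A : pointwise identity
  have stepA : ∀ q : ℕ × ℕ,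
      (if q.1 ≠ 0 ∧ q.2 ≠ 0 ∧ Nat.gcd q.1 q.2 = 1 ∧ N ∣ q.2 then
        ((q.1 : ℝ) ^ A * (q.2 : ℝ) ^ C)⁻¹ else 0) = ∑' d : ℕ, K d q := by
    rintro ⟨a, c⟩
    rcases eq_or_ne a 0 with rfl | ha
    · simp [hK, σ_zero _ _ (by omega : 1 ≤ A)]
    rcases eq_or_ne c 0 with rfl | hc
    · simp [hK, σ_zero _ _ (by omega : 1 ≤ C), ha]
    by_cases hNc : N ∣ c
    · -- main case
      have hcond : ∀ d : ℕ, K d (a, c) =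
          if d ∣ Nat.gcd a c then
            (ArithmeticFunction.moebius d : ℝ) * (((a : ℝ) ^ A)⁻¹ * ((c : ℝ) ^ C)⁻¹) else 0 := by
        intro d
        simp only [hK, hσ]
        by_cases hd : d ∣ Nat.gcd a c
        · have hda : d ∣ a := hd.trans (Nat.gcd_dvd_left a c)
          have hdc : d ∣ c := hd.trans (Nat.gcd_dvd_right a c)
          rw [if_pos hda, if_pos (Nat.lcm_dvd hdc hNc), if_pos hd]
          ring
        · rw [if_neg hd]
          by_cases hda : d ∣ a
          · rw [if_pos hda, if_neg, mul_zero]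
            intro hl
            exact hd (Nat.dvd_gcd hda ((Nat.dvd_lcm_left d N).trans hl))
          · rw [if_neg hda, mul_zero, zero_mul]
      rw [tsum_congr hcond, tsum_eq_sum (s := (Nat.gcd a c).divisors) ?side]
      · rw [Finset.sum_congr rfl (fun b hb => if_pos (Nat.mem_divisors.mp hb).1),
          ← Finset.sum_mul, moeb_sum]
        rcases eq_or_ne (Nat.gcd a c) 1 with h1 | h1
        · simp [h1, ha, hc, hNc, mul_inv, mul_comm]
        · simp [h1, ha, hc, hNc]
      · intro d hd
        rw [if_neg]
        intro hdvd
        exact hd (Nat.mem_divisors.mpr ⟨hdvd, Nat.gcd_ne_zero_left ha⟩)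
    · -- N does not divide c
      rw [if_neg (by tauto)]
      rw [show (∑' d : ℕ, K d (a, c)) = ∑' _ : ℕ, (0 : ℝ) from
        tsum_congr fun d => by
          simp only [hK, hσ]
          rw [if_neg (fun hl => hNc ((Nat.dvd_lcm_right d N).trans hl)), mul_zero],
        tsum_zero]
  -- Step B : summability
  have lcm_pos : ∀ d : ℕ, d ≠ 0 → Nat.lcm d N ≠ 0 := fun d hd => Nat.lcm_ne_zero hd hN0
  have hZAnn : 0 ≤ ZA := tsum_nonneg fun k => by positivity
  have hZCnn : 0 ≤ ZC := tsum_nonneg fun k => by positivity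
  have habs : ∀ d q, |K d q| = |(ArithmeticFunction.moebius d : ℝ)| *
      (σ d A q.1 * σ (Nat.lcm d N) C q.2) := by
    intro d q
    rw [hK, abs_mul, abs_mul, _root_.abs_of_nonneg (σ_nonneg _ _ _),
      _root_.abs_of_nonneg (σ_nonneg _ _ _), mul_assoc]
  have hmu_le : ∀ d : ℕ, |(ArithmeticFunction.moebius d : ℝ)| ≤ 1 := by
    intro d
    have := ArithmeticFunction.abs_moebius_le_one (n := d)
    calc |(ArithmeticFunction.moebius d : ℝ)|
        = ((|ArithmeticFunction.moebius d| : ℤ) : ℝ) := by push_cast; rfl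
      _ ≤ 1 := by exact_mod_cast this
  have hslice : ∀ d : ℕ, Summable fun q : ℕ × ℕ => |K d q| := by
    intro d
    refine Summable.congr ?_ (fun q => (habs d q).symm)
    exact ((summable_dvd_npow_inv hA).mul_of_nonneg (summable_dvd_npow_inv hC)
      (fun k => σ_nonneg _ _ _) (fun k => σ_nonneg _ _ _)).mul_left _
  have hKsum : Summable fun p : ℕ × (ℕ × ℕ) => K p.1 p.2 := by
    refine Summable.of_abs ?_
    rw [summable_prod_of_nonneg (fun p => abs_nonneg _)]
    refine ⟨fun d => hslice d, ?_⟩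
    refine Summable.of_nonneg_of_le (fun d => tsum_nonneg fun q => abs_nonneg _)
      (fun d => ?_) ((summable_npow_inv hA).mul_right (ZA * ZC))
    rcases eq_or_ne d 0 with rfl | hd
    · have : ∀ q : ℕ × ℕ, |K 0 q| = 0 := by
        intro q; rw [habs]; simp
      rw [tsum_congr this, tsum_zero]
      exact mul_nonneg (by positivity) (mul_nonneg hZAnn hZCnn)
    · have : ∀ q : ℕ × ℕ, |K d q| ≤ σ d A q.1 * σ (Nat.lcm d N) C q.2 := by
        intro q
        rw [habs]
        exact mul_le_of_le_one_left (mul_nonneg (σ_nonneg _ _ _) (σ_nonneg _ _ _)) (hmu_le d)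
      refine le_trans (Summable.tsum_le_tsum this (hslice d)
        ((summable_dvd_npow_inv hA).mul_of_nonneg (summable_dvd_npow_inv hC)
          (fun k => σ_nonneg _ _ _) (fun k => σ_nonneg _ _ _))) ?_
      rw [show (∑' q : ℕ × ℕ, σ d A q.1 * σ (Nat.lcm d N) C q.2)
          = (∑' k, σ d A k) * (∑' k, σ (Nat.lcm d N) C k) from
        tsum_pair_mul (summable_dvd_npow_inv hA) (summable_dvd_npow_inv hC)
          (fun k => σ_nonneg _ _ _) (fun k => σ_nonneg _ _ _)]
      simp only [hσ]
      rw [tsum_dvd_npow_inv d (by omega) hd, tsum_dvd_npow_inv (Nat.lcm d N) (by omega) (lcm_pos d hd)]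
      rw [← hZA, ← hZC]
      have h1 : ((Nat.lcm d N : ℝ) ^ C)⁻¹ ≤ 1 := by
        rw [inv_le_one_iff₀]
        right
        have : (1 : ℝ) ≤ (Nat.lcm d N : ℝ) := by
          exact_mod_cast Nat.one_le_iff_ne_zero.mpr (lcm_pos d hd)
        exact one_le_pow₀ this
      calc ((d : ℝ) ^ A)⁻¹ * ZA * (((Nat.lcm d N : ℝ) ^ C)⁻¹ * ZC)
          ≤ ((d : ℝ) ^ A)⁻¹ * ZA * (1 * ZC) := by
            refine mul_le_mul_of_nonneg_left ?_ (by positivity)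
            exact mul_le_mul_of_nonneg_right h1 hZCnn
        _ = ((d : ℝ) ^ A)⁻¹ * (ZA * ZC) := by ring
  -- Step C : chain of rewrites
  rw [tsum_congr stepA]
  have e := Equiv.prodComm (ℕ × ℕ) ℕ
  have swap1 : ∑' q : ℕ × ℕ, ∑' d : ℕ, K d q = ∑' p : ℕ × (ℕ × ℕ), K p.1 p.2 := by
    rw [← (Equiv.prodComm (ℕ × ℕ) ℕ).tsum_eq (fun p : ℕ × (ℕ × ℕ) => K p.1 p.2)]
    exact (Summable.tsum_prod' (hKsum.comp_injective (Equiv.prodComm (ℕ × ℕ) ℕ).injective)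
      (fun q => ((hKsum.comp_injective (Equiv.prodComm (ℕ × ℕ) ℕ).injective).prod_factor q))).symm
  rw [swap1, Summable.tsum_prod' hKsum (fun d => hKsum.prod_factor d)]
  have inner : ∀ d : ℕ, ∑' q : ℕ × ℕ, K d q
      = (ArithmeticFunction.moebius d : ℝ) * (((d : ℝ) ^ A)⁻¹ * ZA) *
        (((Nat.lcm d N : ℝ) ^ C)⁻¹ * ZC) := by
    intro d
    rcases eq_or_ne d 0 with rfl | hd
    · simp [hK]
    have : ∀ q : ℕ × ℕ, K d q = (ArithmeticFunction.moebius d : ℝ) *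
        (σ d A q.1 * σ (Nat.lcm d N) C q.2) := by
      intro q; rw [hK]; ring
    rw [tsum_congr this, tsum_mul_left,
      tsum_pair_mul (summable_dvd_npow_inv hA) (summable_dvd_npow_inv hC)
        (fun k => σ_nonneg _ _ _) (fun k => σ_nonneg _ _ _)]
    rw [tsum_dvd_npow_inv d (by omega) hd,
      tsum_dvd_npow_inv (Nat.lcm d N) (by omega) (lcm_pos d hd), ← hZA, ← hZC]
    ring
  rw [tsum_congr inner]
  rw [show (fun d : ℕ => (ArithmeticFunction.moebius d : ℝ) * (((d : ℝ) ^ A)⁻¹ * ZA) *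
      (((Nat.lcm d N : ℝ) ^ C)⁻¹ * ZC))
    = (fun d : ℕ => (ZA * ZC) * ((ArithmeticFunction.moebius d : ℝ) * ((d : ℝ) ^ A)⁻¹ *
      ((Nat.lcm d N : ℝ) ^ C)⁻¹)) from funext fun d => by ring]
  rw [tsum_mul_left]


lemma euler_main (N A C : ℕ) (hN : 1 ≤ N) (hA : 2 ≤ A) (hC : 2 ≤ C) :
    (∑' d : ℕ, ((ArithmeticFunction.moebius d : ℂ) * ((d : ℂ) ^ A)⁻¹ *
        (((d / Nat.gcd d N : ℕ) : ℂ) ^ C)⁻¹))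
      = (riemannZeta ((A : ℂ) + C))⁻¹ *
        ∏ p ∈ N.primeFactors, (1 - ((p : ℂ) ^ A)⁻¹) / (1 - ((p : ℂ) ^ (A + C))⁻¹) := by
  have hN0 : N ≠ 0 := by omega
  set hc : ℕ → ℂ := fun d => (ArithmeticFunction.moebius d : ℂ) * ((d : ℂ) ^ A)⁻¹ *
      (((d / Nat.gcd d N : ℕ) : ℂ) ^ C)⁻¹ with hhc
  have h1 : hc 1 = 1 := by simp [hhc, Nat.gcd_one_left]
  have h0 : hc 0 = 0 := by simp [hhc]
  have hmul : ∀ {m n : ℕ}, Nat.Coprime m n → hc (m * n) = hc m * hc n := by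
    intro m n hmn
    have hg : Nat.gcd (m * n) N = Nat.gcd m N * Nat.gcd n N := by
      rw [Nat.gcd_comm (m * n) N, Nat.Coprime.gcd_mul N hmn, Nat.gcd_comm N m, Nat.gcd_comm N n]
    have hdiv : (m * n) / Nat.gcd (m * n) N = (m / Nat.gcd m N) * (n / Nat.gcd n N) := by
      rw [hg, ← Nat.div_mul_div_comm (Nat.gcd_dvd_left m N) (Nat.gcd_dvd_left n N)]
    have hmoeb : (ArithmeticFunction.moebius (m * n) : ℤ)
        = ArithmeticFunction.moebius m * ArithmeticFunction.moebius n :=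
      ArithmeticFunction.isMultiplicative_moebius.map_mul_of_coprime hmn
    simp only [hhc, hdiv]
    push_cast [hmoeb]
    rw [mul_pow, mul_pow, mul_inv, mul_inv]
    ring
  have hmu_norm : ∀ d : ℕ, ‖(ArithmeticFunction.moebius d : ℂ)‖ ≤ 1 := by
    intro d
    rw [show ((ArithmeticFunction.moebius d : ℤ) : ℂ) = ((ArithmeticFunction.moebius d : ℤ) : ℂ)
      from rfl, Complex.norm_intCast]
    exact_mod_cast ArithmeticFunction.abs_moebius_le_one (n := d)
  have hnorm : ∀ d : ℕ, ‖hc d‖ ≤ ((d : ℝ) ^ A)⁻¹ := by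
    intro d
    rcases eq_or_ne d 0 with rfl | hd
    · simp [h0]
    have hq : 1 ≤ d / Nat.gcd d N := by
      rw [Nat.le_div_iff_mul_le (Nat.gcd_pos_of_pos_right d (by omega)), one_mul]
      exact Nat.le_of_dvd (by omega) (Nat.gcd_dvd_left d N)
    rw [hhc]
    simp only [norm_mul, norm_inv, norm_pow, Complex.norm_natCast]
    have e1 : (((d / Nat.gcd d N : ℕ) : ℝ) ^ C)⁻¹ ≤ 1 := by
      rw [inv_le_one_iff₀]
      right
      exact one_le_pow₀ (by exact_mod_cast hq)
    calc ‖(ArithmeticFunction.moebius d : ℂ)‖ * ((d : ℝ) ^ A)⁻¹ *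
          (((d / Nat.gcd d N : ℕ) : ℝ) ^ C)⁻¹
        ≤ 1 * ((d : ℝ) ^ A)⁻¹ * 1 := by
          refine mul_le_mul (mul_le_mul (hmu_norm d) le_rfl (by positivity) zero_le_one) e1
            (by positivity) (by positivity)
      _ = ((d : ℝ) ^ A)⁻¹ := by ring
  have hsum : Summable fun d : ℕ => ‖hc d‖ := by
    refine Summable.of_nonneg_of_le (fun d => norm_nonneg _) hnorm ?_
    simpa using Real.summable_nat_pow_inv.mpr (by omega : 1 < A)
  have hP := EulerProduct.eulerProduct_hasProd h1 hmul hsum h0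
  -- local factors
  have hloc : ∀ p : Nat.Primes, (∑' e : ℕ, hc ((p : ℕ) ^ e)) = 1 + hc p := by
    intro p
    rw [tsum_eq_sum (s := ({0, 1} : Finset ℕ)) ?rest]
    · rw [Finset.sum_pair (by norm_num : (0 : ℕ) ≠ 1), pow_zero, pow_one, h1]
    · intro e he
      simp only [Finset.mem_insert, Finset.mem_singleton, not_or] at he
      have hz : ArithmeticFunction.moebius ((p : ℕ) ^ e) = 0 := by
        rw [ArithmeticFunction.moebius_apply_prime_pow p.2 he.1, if_neg he.2]
      simp [hhc, hz]
  set Q : Nat.Primes → ℂ := fun p => 1 - (((p : ℕ) : ℂ) ^ (A + C))⁻¹ with hQdef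
  set r : Nat.Primes → ℂ := fun p =>
    if (p : ℕ) ∣ N then (1 - (((p : ℕ) : ℂ) ^ A)⁻¹) / Q p else 1 with hrdef
  have hp2 : ∀ p : Nat.Primes, (2 : ℝ) ≤ ((p : ℕ) : ℝ) := by
    intro p
    exact_mod_cast p.2.two_le
  have hQne : ∀ p : Nat.Primes, Q p ≠ 0 := by
    intro p
    rw [hQdef, sub_ne_zero]
    intro h
    have hnorm1 : (1 : ℝ) = ‖((((p : ℕ) : ℂ)) ^ (A + C))⁻¹‖ := by
      rw [← h]; simp
    rw [norm_inv, norm_pow, Complex.norm_natCast] at hnorm1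
    have : (2 : ℝ) ^ (A + C) ≤ ((p : ℕ) : ℝ) ^ (A + C) := pow_le_pow_left₀ (by norm_num) (hp2 p) _
    have h2 : (1 : ℝ) < (2 : ℝ) ^ (A + C) := by
      apply one_lt_pow₀ (by norm_num)
      omega
    have hlt : ((((p : ℕ) : ℝ)) ^ (A + C))⁻¹ < 1 := by
      rw [inv_lt_one_iff₀]
      right
      linarith
    linarith [hnorm1 ▸ hlt]
  have hfact : ∀ p : Nat.Primes, 1 + hc p = Q p * r p := by
    intro p
    have hμp : (ArithmeticFunction.moebius (p : ℕ) : ℤ) = -1 :=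
      ArithmeticFunction.moebius_apply_prime p.2
    by_cases hdvd : (p : ℕ) ∣ N
    · have hg : Nat.gcd (p : ℕ) N = (p : ℕ) := Nat.gcd_eq_left hdvd
      have : hc p = -(((p : ℕ) : ℂ) ^ A)⁻¹ := by
        rw [hhc]
        simp only [hg, Nat.div_self p.2.pos]
        push_cast [hμp]
        ring
      rw [this]
      simp only [hrdef]
      rw [if_pos hdvd, mul_comm, div_mul_cancel₀ _ (hQne p)]
      ring
    · have hg : Nat.gcd (p : ℕ) N = 1 := (Nat.Prime.coprime_iff_not_dvd p.2).mpr hdvd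
      have : hc p = -((((p : ℕ) : ℂ)) ^ (A + C))⁻¹ := by
        rw [hhc]
        simp only [hg, Nat.div_one]
        push_cast [hμp]
        rw [pow_add, mul_inv]
        ring
      rw [this]
      simp only [hrdef]
      rw [if_neg hdvd, mul_one]
      simp only [hQdef]
      ring
  -- zeta Euler product
  have hre : 1 < ((A : ℂ) + C).re := by
    simp only [add_re, natCast_re]
    have : (2 : ℝ) ≤ (A : ℝ) := by exact_mod_cast hA
    have : (2 : ℝ) ≤ (C : ℝ) := by exact_mod_cast hC
    linarith [show (2:ℝ) ≤ (A:ℝ) from by exact_mod_cast hA]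
  have hZ := riemannZeta_eulerProduct_hasProd hre
  have hZfun : (fun p : Nat.Primes => (1 - ((p : ℕ) : ℂ) ^ (-((A : ℂ) + C)))⁻¹)
      = fun p => (Q p)⁻¹ := by
    funext p
    rw [hQdef, Complex.cpow_neg, show ((A : ℂ) + C) = ((A + C : ℕ) : ℂ) by push_cast; ring,
      Complex.cpow_natCast]
  rw [hZfun] at hZ
  have hPr : HasProd (fun p : Nat.Primes => Q p * r p) (∑' n, hc n) := by
    have := hP
    rw [show (fun p : Nat.Primes => ∑' e : ℕ, hc ((p : ℕ) ^ e)) = fun p => Q p * r p from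
      funext fun p => by rw [hloc p, hfact p]] at this
    exact this
  have hmix : HasProd r ((∑' n, hc n) * riemannZeta ((A : ℂ) + C)) := by
    have h' := hPr.mul hZ
    rw [show (fun p : Nat.Primes => Q p * r p * (Q p)⁻¹) = r from
      funext fun p => by
        rw [mul_comm (Q p) (r p), mul_assoc, mul_inv_cancel₀ (hQne p), mul_one]] at h'
    exact h'
  -- finite product
  set emb : {x // x ∈ N.primeFactors} ↪ Nat.Primes :=
    ⟨fun q => ⟨q.1, Nat.prime_of_mem_primeFactors q.2⟩,
     fun x y h => Subtype.ext (by
        have := congrArg (fun z : Nat.Primes => (z : ℕ)) h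
        simpa using this)⟩ with hemb
  set s : Finset Nat.Primes := N.primeFactors.attach.map emb with hs
  have hr : HasProd r (∏ p ∈ s, r p) := by
    apply hasProd_prod_of_ne_finset_one
    intro p hp
    simp only [hrdef]
    rw [if_neg]
    intro hdvd
    apply hp
    rw [hs, Finset.mem_map]
    exact ⟨⟨(p : ℕ), Nat.mem_primeFactors.mpr ⟨p.2, hdvd, hN0⟩⟩, Finset.mem_attach _ _,
      Subtype.ext rfl⟩
  have huniq := hmix.unique hr
  have hsprod : ∏ p ∈ s, r p
      = ∏ p ∈ N.primeFactors, (1 - ((p : ℂ) ^ A)⁻¹) / (1 - ((p : ℂ) ^ (A + C))⁻¹) := by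
    rw [hs, Finset.prod_map]
    calc ∏ q ∈ N.primeFactors.attach, r (emb q)
        = ∏ q ∈ N.primeFactors.attach,
            (1 - ((q.1 : ℂ) ^ A)⁻¹) / (1 - ((q.1 : ℂ) ^ (A + C))⁻¹) := by
          refine Finset.prod_congr rfl fun q _ => ?_
          have hdvd : (q.1 : ℕ) ∣ N := (Nat.mem_primeFactors.mp q.2).2.1
          change (if (q.1 : ℕ) ∣ N then (1 - (((q.1 : ℕ) : ℂ) ^ A)⁻¹) /
            (1 - (((q.1 : ℕ) : ℂ) ^ (A + C))⁻¹) else 1) = _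
          rw [if_pos hdvd]
      _ = _ := by
          rw [← Finset.prod_attach N.primeFactors
            (fun p => (1 - ((p : ℂ) ^ A)⁻¹) / (1 - ((p : ℂ) ^ (A + C))⁻¹))]
  have hz : riemannZeta ((A : ℂ) + C) ≠ 0 := riemannZeta_ne_zero_of_one_lt_re hre
  rw [← hsprod, ← huniq, mul_comm (∑' n, hc n) _, inv_mul_cancel_left₀ hz]


/-- the value of `Σ 1/(a^{ñ+1} c^{n+1})` over pairs of nonzero coprime
integers `(a, c)` with `N ∣ c`: it vanishes for even `n`, and for odd `n` it equals
`4 ζ(n+1) ζ(ñ+1) / (ζ(w+2) N^{n+1}) · Π_{p ∣ N} (1−p^{−(ñ+1)})/(1−p^{−(w+2)})`. -/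
theorem coprime_pair_zeta_sum (N w n : ℕ) (hN : 1 ≤ N) (hw : 2 ≤ w) (hwe : Even w)
    (hn0 : 0 < n) (hnw : n < w) :
    (Even n →
      (∑' p : ℤ × ℤ, if p.1 ≠ 0 ∧ p.2 ≠ 0 ∧ Int.gcd p.1 p.2 = 1 ∧ (N : ℤ) ∣ p.2 then
        ((p.1 : ℝ) ^ (w - n + 1) * (p.2 : ℝ) ^ (n + 1))⁻¹ else 0) = 0) ∧
    (Odd n →
      ((∑' p : ℤ × ℤ, if p.1 ≠ 0 ∧ p.2 ≠ 0 ∧ Int.gcd p.1 p.2 = 1 ∧ (N : ℤ) ∣ p.2 then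
        ((p.1 : ℝ) ^ (w - n + 1) * (p.2 : ℝ) ^ (n + 1))⁻¹ else 0 : ℝ) : ℂ) =
        4 * riemannZeta (n + 1) * riemannZeta ((w : ℂ) - n + 1) /
          (riemannZeta (w + 2) * (N : ℂ) ^ (n + 1)) *
        ∏ p ∈ N.primeFactors,
          (1 - (p : ℂ) ^ (-((w : ℤ) - n) - 1)) / (1 - (p : ℂ) ^ (-(w : ℤ) - 2))) := by
  have hnwle : n ≤ w := hnw.le
  set F : ℤ × ℤ → ℝ := fun p =>
    if p.1 ≠ 0 ∧ p.2 ≠ 0 ∧ Int.gcd p.1 p.2 = 1 ∧ (N : ℤ) ∣ p.2 then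
      ((p.1 : ℝ) ^ (w - n + 1) * (p.2 : ℝ) ^ (n + 1))⁻¹ else 0 with hF
  constructor
  · -- even n
    intro hne
    have hodd : Odd (w - n + 1) :=
      (((Nat.even_sub hnwle).mpr (iff_of_true hwe hne))).add_one
    set e : ℤ × ℤ ≃ ℤ × ℤ := Equiv.prodCongr (Equiv.neg ℤ) (Equiv.refl ℤ) with he
    have key : ∀ p : ℤ × ℤ, F (e p) = -F p := by
      rintro ⟨a, c⟩
      have hep : e (a, c) = (-a, c) := by simp [he]
      rw [hep]
      by_cases h : a ≠ 0 ∧ c ≠ 0 ∧ Int.gcd a c = 1 ∧ (N : ℤ) ∣ c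
      · have h' : -a ≠ 0 ∧ c ≠ 0 ∧ Int.gcd (-a) c = 1 ∧ (N : ℤ) ∣ c :=
          ⟨neg_ne_zero.mpr h.1, h.2.1, by rw [Int.neg_gcd]; exact h.2.2.1, h.2.2.2⟩
        rw [hF]
        simp only
        rw [if_pos h', if_pos h]
        push_cast
        rw [hodd.neg_pow, neg_mul, inv_neg]
      · have h' : ¬(-a ≠ 0 ∧ c ≠ 0 ∧ Int.gcd (-a) c = 1 ∧ (N : ℤ) ∣ c) := by
          simpa [Int.neg_gcd] using h
        rw [hF]
        simp only
        rw [if_neg h', if_neg h, neg_zero]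
    have h2 : ∑' p, F p = -∑' p, F p := by
      conv_lhs => rw [← e.tsum_eq F]
      rw [tsum_congr key, tsum_neg]
    linarith
  · -- odd n
    intro hodd
    set A := w - n + 1 with hAdef
    set C := n + 1 with hCdef
    have hA : 2 ≤ A := by omega
    have hC : 2 ≤ C := by omega
    have hAeven : Even A := (Nat.Even.sub_odd hnwle hwe hodd).add_one
    have hCeven : Even C := hodd.add_one
    have hN0 : N ≠ 0 := by omega
    -- the nat-indexed sum
    set G : ℕ × ℕ → ℝ := fun q =>
      if q.1 ≠ 0 ∧ q.2 ≠ 0 ∧ Nat.gcd q.1 q.2 = 1 ∧ N ∣ q.2 then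
        ((q.1 : ℝ) ^ A * (q.2 : ℝ) ^ C)⁻¹ else 0 with hG
    have hGnonneg : ∀ q, 0 ≤ G q := by
      intro q; rw [hG]; simp only; split <;> positivity
    have hGsummable : Summable G := by
      refine Summable.of_nonneg_of_le hGnonneg (fun q => ?_)
        ((summable_npow_inv hA).mul_of_nonneg (summable_npow_inv hC)
          (fun k => by positivity) (fun k => by positivity))
      rw [hG]
      simp only
      split
      · rw [mul_inv]
      · positivity
    -- sign folding
    set j : Bool × ℕ → ℤ := fun s => if s.1 then ((s.2 : ℤ) + 1) else -((s.2 : ℤ) + 1) with hj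
    have hjinj : Function.Injective j := by
      rintro ⟨s, a⟩ ⟨t, b⟩ h
      cases s <;> cases t <;> simp_all [hj] <;> omega
    have hjne : ∀ s a, j (s, a) ≠ 0 := by
      intro s a; cases s <;> simp [hj] <;> omega
    have hjabs : ∀ s a, (j (s, a)).natAbs = a + 1 := by
      intro s a; cases s <;> simp [hj] <;> omega
    have hjpowA : ∀ s a, ((j (s, a) : ℤ) : ℝ) ^ A = ((a : ℝ) + 1) ^ A := by
      intro s a; cases s <;> simp only [hj, if_true, if_false, Bool.false_eq_true] <;> push_cast
      · rw [hAeven.neg_pow]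
      · rfl
    have hjpowC : ∀ s a, ((j (s, a) : ℤ) : ℝ) ^ C = ((a : ℝ) + 1) ^ C := by
      intro s a; cases s <;> simp only [hj, if_true, if_false, Bool.false_eq_true] <;> push_cast
      · rw [hCeven.neg_pow]
      · rfl
    have hjdvd : ∀ s a, ((N : ℤ) ∣ j (s, a)) ↔ N ∣ (a + 1) := by
      intro s a
      cases s <;> simp only [hj, if_true, if_false, Bool.false_eq_true, dvd_neg] <;>
        rw [show ((a : ℤ) + 1) = ((a + 1 : ℕ) : ℤ) by push_cast; ring, Int.natCast_dvd_natCast]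
    set I : (Bool × Bool) × (ℕ × ℕ) → ℤ × ℤ := fun q =>
      (j (q.1.1, q.2.1), j (q.1.2, q.2.2)) with hI
    have hIinj : Function.Injective I := by
      rintro ⟨⟨s, t⟩, ⟨a, c⟩⟩ ⟨⟨s', t'⟩, ⟨a', c'⟩⟩ h
      rw [hI, Prod.mk.injEq] at h
      have h1 := hjinj h.1
      have h2 := hjinj h.2
      simp only [Prod.mk.injEq] at h1 h2
      simp [h1.1, h1.2, h2.1, h2.2]
    have hIrange : ∀ b : ℤ × ℤ, b ∉ Set.range I → F b = 0 := by
      rintro ⟨x, y⟩ hb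
      rw [hF]
      simp only
      rw [if_neg]
      rintro ⟨hx, hy, -, -⟩
      apply hb
      have hsur : ∀ z : ℤ, z ≠ 0 → ∃ sa : Bool × ℕ, j sa = z := by
        intro z hz
        rcases lt_or_gt_of_ne hz with hlt | hgt
        · exact ⟨(false, (-z - 1).toNat), by simp [hj]; omega⟩
        · exact ⟨(true, (z - 1).toNat), by simp [hj]; omega⟩
      obtain ⟨⟨s, a⟩, hsa⟩ := hsur x hx
      obtain ⟨⟨t, c⟩, htc⟩ := hsur y hy
      exact ⟨((s, t), (a, c)), by rw [hI]; simp [hsa, htc]⟩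
    have hFI : ∀ q : (Bool × Bool) × (ℕ × ℕ), F (I q) = G (q.2.1 + 1, q.2.2 + 1) := by
      rintro ⟨⟨s, t⟩, ⟨a, c⟩⟩
      rw [hF, hI, hG]
      simp only
      have hgcd : Int.gcd (j (s, a)) (j (t, c)) = Nat.gcd (a + 1) (c + 1) := by
        rw [show Int.gcd (j (s, a)) (j (t, c))
            = Nat.gcd (j (s, a)).natAbs (j (t, c)).natAbs from rfl, hjabs, hjabs]
      by_cases hcond : Nat.gcd (a + 1) (c + 1) = 1 ∧ N ∣ (c + 1)
      · rw [if_pos ⟨hjne s a, hjne t c, hgcd.trans hcond.1, (hjdvd t c).mpr hcond.2⟩,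
          if_pos ⟨by omega, by omega, hcond.1, hcond.2⟩, hjpowA, hjpowC]
        push_cast
        rfl
      · rw [if_neg, if_neg]
        · rintro ⟨-, -, hg, hd⟩
          exact hcond ⟨hg, hd⟩
        · rintro ⟨-, -, hg, hd⟩
          exact hcond ⟨hgcd.symm.trans hg, (hjdvd t c).mp hd⟩
    -- now compute the ℤ×ℤ sum as 4 times the ℕ×ℕ sum
    have hshift : ∑' q : ℕ × ℕ, G (q.1 + 1, q.2 + 1) = ∑' q : ℕ × ℕ, G q := by
      refine tsum_comp_of_injective (fun q : ℕ × ℕ => (q.1 + 1, q.2 + 1)) ?_ ?_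
      · rintro ⟨a, c⟩ ⟨a', c'⟩ h
        simp only [Prod.mk.injEq] at h ⊢
        omega
      · rintro ⟨x, y⟩ hb
        rw [hG]
        simp only
        rw [if_neg]
        rintro ⟨hx, hy, -, -⟩
        exact hb ⟨(x - 1, y - 1), by simp; omega⟩
    have hsplit : ∑' p : ℤ × ℤ, F p = 4 * ∑' q : ℕ × ℕ, G q := by
      rw [← tsum_comp_of_injective I hIinj hIrange, tsum_congr hFI]
      have hsum2 : Summable fun q : (Bool × Bool) × (ℕ × ℕ) => G (q.2.1 + 1, q.2.2 + 1) := by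
        rw [summable_prod_of_nonneg (fun q => hGnonneg _)]
        constructor
        · intro st
          exact (hGsummable.comp_injective (by
            rintro ⟨a, c⟩ ⟨a', c'⟩ h
            simp only [Prod.mk.injEq] at h ⊢
            omega : Function.Injective fun q : ℕ × ℕ => (q.1 + 1, q.2 + 1)))
        · exact Summable.of_finite
      rw [Summable.tsum_prod' hsum2 (fun st => hsum2.prod_factor st)]
      rw [tsum_congr (fun st : Bool × Bool => (hshift : _))]
      rw [tsum_fintype, Finset.sum_const, Finset.card_univ]
      simp only [Fintype.card_prod, Fintype.card_bool, smul_eq_mul]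
      norm_num
    -- assemble
    have hlcm : ∀ d : ℕ, ((Nat.lcm d N : ℝ) ^ C)⁻¹
        = ((N : ℝ) ^ C)⁻¹ * (((d / Nat.gcd d N : ℕ) : ℝ) ^ C)⁻¹ := by
      intro d
      have hg : Nat.gcd d N ≠ 0 := Nat.gcd_ne_zero_right hN0
      have hlcm_eq : Nat.lcm d N = (d / Nat.gcd d N) * N := by
        have h1 : Nat.gcd d N * Nat.lcm d N = Nat.gcd d N * ((d / Nat.gcd d N) * N) := by
          rw [Nat.gcd_mul_lcm, ← mul_assoc, Nat.mul_div_cancel' (Nat.gcd_dvd_left d N)]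
        exact Nat.eq_of_mul_eq_mul_left (Nat.pos_of_ne_zero hg) h1
      rw [hlcm_eq]
      push_cast
      rw [mul_pow, mul_inv, mul_comm]
    have hfactor : ∑' d : ℕ, ((ArithmeticFunction.moebius d : ℝ) * ((d : ℝ) ^ A)⁻¹ *
          ((Nat.lcm d N : ℝ) ^ C)⁻¹)
        = ((N : ℝ) ^ C)⁻¹ * ∑' d : ℕ, ((ArithmeticFunction.moebius d : ℝ) * ((d : ℝ) ^ A)⁻¹ *
          (((d / Nat.gcd d N : ℕ) : ℝ) ^ C)⁻¹) := by
      rw [← tsum_mul_left]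
      refine tsum_congr fun d => ?_
      rw [hlcm d]
      ring
    rw [hsplit, odd_case_main N A C hN hA hC, hfactor]
    push_cast [Complex.ofReal_tsum]
    rw [show (∑' d : ℕ, ((ArithmeticFunction.moebius d : ℂ) * ((d : ℂ) ^ A)⁻¹ *
        (((d / Nat.gcd d N : ℕ) : ℂ) ^ C)⁻¹)) = (riemannZeta ((A : ℂ) + C))⁻¹ *
        ∏ p ∈ N.primeFactors, (1 - ((p : ℂ) ^ A)⁻¹) / (1 - ((p : ℂ) ^ (A + C))⁻¹) from
      euler_main N A C hN hA hC]
    have hZA : (∑' k : ℕ, (((k : ℂ)) ^ A)⁻¹) = riemannZeta (A : ℂ) := by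
      rw [zeta_nat_eq_tsum_of_gt_one (by omega : 1 < A)]
      exact tsum_congr fun k => by rw [one_div]
    have hZC : (∑' k : ℕ, (((k : ℂ)) ^ C)⁻¹) = riemannZeta (C : ℂ) := by
      rw [zeta_nat_eq_tsum_of_gt_one (by omega : 1 < C)]
      exact tsum_congr fun k => by rw [one_div]
    rw [hZA, hZC]
    have e1 : ((w : ℂ) - n + 1) = ((A : ℕ) : ℂ) := by
      rw [hAdef]
      push_cast [Nat.cast_sub hnwle]
      ring
    have e2 : ((n : ℂ) + 1) = ((C : ℕ) : ℂ) := by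
      rw [hCdef]
      push_cast
      ring
    have e3 : ((w : ℂ) + 2) = ((A : ℂ) + C) := by
      rw [hAdef, hCdef]
      push_cast [Nat.cast_sub hnwle]
      ring
    have eprod : ∀ p ∈ N.primeFactors,
        (1 - (p : ℂ) ^ (-((w : ℤ) - n) - 1)) / (1 - (p : ℂ) ^ (-(w : ℤ) - 2))
          = (1 - ((p : ℂ) ^ A)⁻¹) / (1 - ((p : ℂ) ^ (A + C))⁻¹) := by
      intro p _
      rw [show (-((w : ℤ) - n) - 1) = -(A : ℤ) by
        rw [hAdef]; push_cast [Nat.cast_sub hnwle]; ring]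
      rw [show (-(w : ℤ) - 2) = -((A + C : ℕ) : ℤ) by
        rw [hAdef, hCdef]; push_cast [Nat.cast_sub hnwle]; ring]
      rw [zpow_neg, zpow_natCast, zpow_neg, zpow_natCast]
    rw [e1, e2, e3, Finset.prod_congr rfl eprod]
    have hzW : riemannZeta ((A : ℂ) + C) ≠ 0 := by
      refine riemannZeta_ne_zero_of_one_lt_re ?_
      simp only [Complex.add_re, Complex.natCast_re]
      have h2 : (2 : ℝ) ≤ (A : ℝ) := by exact_mod_cast hA
      have h3 : (2 : ℝ) ≤ (C : ℝ) := by exact_mod_cast hC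
      linarith
    rw [div_eq_mul_inv, mul_inv]
    ring
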